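/- arXiv:2005.09839 — 3 statements merged into one kernel-verified Lean document; each statement's English description precedes it below -/
import Mathlib

section
/- Fix r, λ > 0 and v ∈ [0,1). Viewing B as a real variable with B ≥ 1, the function f(B) = (Bλ − (B−1)rv)/(r + Bλ) is strictly increasing in B if v < λ/(r+λ), constant in B if v = λ/(r+λ), and strictly decreasing in B if v > λ/(r+λ). -/
/-- Viewing `B` as a real variable with `B ≥ 1`, the function
`f(B) = (Bl − (B−1)rv)/(r + Bl)` is strictly increasing in `B` if `v < l/(r+l)`,
constant in `B` if `v = l/(r+l)`, and strictly decreasing in `B` if `v > l/(r+l)`. -/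
theorem benchmark_ratio_monotonicity_in_B (r l v : ℝ)
    (hr : 0 < r) (hl : 0 < l) (hv : v ∈ Set.Ico (0:ℝ) 1) :
    (v < l / (r + l) →
      StrictMonoOn (fun B : ℝ => (B * l - (B - 1) * r * v) / (r + B * l)) (Set.Ici 1)) ∧
    (v = l / (r + l) →
      ∀ B ∈ Set.Ici (1:ℝ), ∀ B' ∈ Set.Ici (1:ℝ),
        (B * l - (B - 1) * r * v) / (r + B * l)
          = (B' * l - (B' - 1) * r * v) / (r + B' * l)) ∧
    (v > l / (r + l) →
      StrictAntiOn (fun B : ℝ => (B * l - (B - 1) * r * v) / (r + B * l)) (Set.Ici 1)) := by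
  have hrl : 0 < r + l := by linarith
  have hden : ∀ B : ℝ, B ∈ Set.Ici (1:ℝ) → 0 < r + B * l := by
    intro B hB
    simp only [Set.mem_Ici] at hB
    nlinarith
  refine ⟨?_, ?_, ?_⟩
  · intro hvlt a ha b hb hab
    have hv' : v * (r + l) < l := by
      rw [lt_div_iff₀ hrl] at hvlt; linarith
    have hda := hden a ha
    have hdb := hden b hb
    simp only
    rw [div_lt_div_iff₀ hda hdb]
    nlinarith [mul_pos hr (sub_pos.mpr hab)]
  · intro hveq B hB B' hB'
    have hv' : v * (r + l) = l := by
      rw [hveq]; field_simp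
    have hdB := hden B hB
    have hdB' := hden B' hB'
    rw [div_eq_div_iff (ne_of_gt hdB) (ne_of_gt hdB')]
    linear_combination (B' - B) * r * hv'
  · intro hvgt a ha b hb hab
    have hv' : l < v * (r + l) := by
      rw [gt_iff_lt, div_lt_iff₀ hrl] at hvgt; linarith
    have hda := hden a ha
    have hdb := hden b hb
    simp only
    rw [div_lt_div_iff₀ hdb hda]
    nlinarith [mul_pos hr (sub_pos.mpr hab)]
end

section
/- In the diffusion process of the previous context, for any initial state K⁰ = (K_b⁰, K_s⁰) with s ∈ K_s⁰, any buyer j ∉ K_b⁰, any link sequence ξ, and any step z: the buyer component satisfies κ_b^z((K_b⁰ ∪ {j}, K_s⁰), ξ) \ κ_b^z((K_b⁰, K_s⁰), ξ) ⊆ κ_b^z(({j}, {s}), ξ) \ κ_b^z((∅, {s}), ξ). -/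
variable {P : Type*}

/-- One step of the information-diffusion process about guilty seller `s`. -/
def diffuseStep (Buyers Sellers : Set P) (s : P) (l : P × P)
    (K : Set P × Set P) : Set P × Set P :=
  (K.1 ∪ {b | b ∈ Buyers ∧ b ∉ K.1 ∧
      ((l.1 = b ∧ l.2 ∈ K.1 ∪ K.2) ∨ (l.2 = b ∧ l.1 ∈ K.1 ∪ K.2))},
   K.2 ∪ {t | t ∈ Sellers ∧ t ≠ s ∧ t ∉ K.2 ∧
      ((l.1 = t ∧ l.2 ∈ (K.1 ∪ K.2) \ {s}) ∨ (l.2 = t ∧ l.1 ∈ (K.1 ∪ K.2) \ {s}))})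

/-- The state of informed players after the first `z` link recognitions of `ξ`. -/
def kappa (Buyers Sellers : Set P) (s : P) (ξ : ℕ → P × P) :
    ℕ → Set P × Set P → Set P × Set P
  | 0, K => K
  | z + 1, K => diffuseStep Buyers Sellers s (ξ (z + 1))
      (kappa Buyers Sellers s ξ z K)

lemma diffuseStep_mono (Bu Se : Set P) (s : P) (l : P × P) {K K' : Set P × Set P}
    (h1 : K.1 ⊆ K'.1) (h2 : K.2 ⊆ K'.2) :
    (diffuseStep Bu Se s l K).1 ⊆ (diffuseStep Bu Se s l K').1 ∧
    (diffuseStep Bu Se s l K).2 ⊆ (diffuseStep Bu Se s l K').2 := by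
  have ha1 : l.1 ∈ K.1 → l.1 ∈ K'.1 := fun h => h1 h
  have ha2 : l.1 ∈ K.2 → l.1 ∈ K'.2 := fun h => h2 h
  have hb1 : l.2 ∈ K.1 → l.2 ∈ K'.1 := fun h => h1 h
  have hb2 : l.2 ∈ K.2 → l.2 ∈ K'.2 := fun h => h2 h
  constructor <;> intro x hx <;>
    simp only [diffuseStep, Set.mem_union, Set.mem_setOf_eq, Set.mem_diff,
      Set.mem_singleton_iff] at hx ⊢
  · rcases hx with h | ⟨hBu, hn, hlink⟩
    · exact Or.inl (h1 h)
    · by_cases hK : x ∈ K'.1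
      · exact Or.inl hK
      · refine Or.inr ⟨hBu, hK, ?_⟩
        rcases hlink with ⟨he, hm⟩ | ⟨he, hm⟩
        · exact Or.inl ⟨he, hm.imp hb1 hb2⟩
        · exact Or.inr ⟨he, hm.imp ha1 ha2⟩
  · rcases hx with h | ⟨hSe, hns, hn, hlink⟩
    · exact Or.inl (h2 h)
    · by_cases hK : x ∈ K'.2
      · exact Or.inl hK
      · refine Or.inr ⟨hSe, hns, hK, ?_⟩
        rcases hlink with ⟨he, hm, hmn⟩ | ⟨he, hm, hmn⟩
        · exact Or.inl ⟨he, hm.imp hb1 hb2, hmn⟩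
        · exact Or.inr ⟨he, hm.imp ha1 ha2, hmn⟩

lemma kappa_mono (Bu Se : Set P) (s : P) (ξ : ℕ → P × P) :
    ∀ z (K K' : Set P × Set P), K.1 ⊆ K'.1 → K.2 ⊆ K'.2 →
      (kappa Bu Se s ξ z K).1 ⊆ (kappa Bu Se s ξ z K').1 ∧
      (kappa Bu Se s ξ z K).2 ⊆ (kappa Bu Se s ξ z K').2 := by
  intro z
  induction z with
  | zero => intro K K' h1 h2; exact ⟨h1, h2⟩
  | succ n ih =>
    intro K K' h1 h2
    exact diffuseStep_mono Bu Se s (ξ (n + 1)) (ih K K' h1 h2).1 (ih K K' h1 h2).2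

lemma kappa_stay (Bu Se : Set P) (s : P) (ξ : ℕ → P × P) :
    ∀ z (K : Set P × Set P), K.1 ⊆ Bu → K.2 ⊆ Se →
      (kappa Bu Se s ξ z K).1 ⊆ Bu ∧ (kappa Bu Se s ξ z K).2 ⊆ Se := by
  intro z
  induction z with
  | zero => intro K h1 h2; exact ⟨h1, h2⟩
  | succ n ih =>
    intro K h1 h2
    obtain ⟨ih1, ih2⟩ := ih K h1 h2
    constructor <;> intro x hx <;>
      simp only [kappa, diffuseStep, Set.mem_union, Set.mem_setOf_eq] at hx
    · rcases hx with h | h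
      · exact ih1 h
      · exact h.1
    · rcases hx with h | h
      · exact ih2 h
      · exact h.1

/-- The marginal effect of one extra initially informed buyer `j` on the set of
informed buyers is largest when no one else is initially informed (Ellison's
Lemma 1 adaptation). -/
theorem kappa_marginal_effect [Fintype P] (Buyers Sellers : Set P)
    (hdisj : Disjoint Buyers Sellers) (hcover : Buyers ∪ Sellers = Set.univ)
    (s : P) (hs : s ∈ Sellers) (ξ : ℕ → P × P)
    (Kb0 Ks0 : Set P) (hKb : Kb0 ⊆ Buyers) (hKs : Ks0 ⊆ Sellers) (hsK : s ∈ Ks0)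
    (j : P) (hj : j ∈ Buyers) (hjK : j ∉ Kb0) :
    ∀ z : ℕ,
      (kappa Buyers Sellers s ξ z (Kb0 ∪ {j}, Ks0)).1 \
        (kappa Buyers Sellers s ξ z (Kb0, Ks0)).1 ⊆
      (kappa Buyers Sellers s ξ z ({j}, {s})).1 \
        (kappa Buyers Sellers s ξ z (∅, {s})).1 := by
  set KA : Set P × Set P := (Kb0 ∪ {j}, Ks0) with hKA
  set KB : Set P × Set P := (Kb0, Ks0) with hKB
  set KC : Set P × Set P := ({j}, {s}) with hKC
  set KD : Set P × Set P := (∅, {s}) with hKD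
  have hDB1 : KD.1 ⊆ KB.1 := Set.empty_subset _
  have hDB2 : KD.2 ⊆ KB.2 := Set.singleton_subset_iff.mpr hsK
  have hmemB : ∀ y : P, y ∈ Buyers → y ∉ Sellers :=
    fun y hy hy' => Set.disjoint_left.mp hdisj hy hy'
  have main : ∀ z : ℕ,
      ((kappa Buyers Sellers s ξ z KA).1 \ (kappa Buyers Sellers s ξ z KB).1 ⊆
        (kappa Buyers Sellers s ξ z KC).1 \ (kappa Buyers Sellers s ξ z KD).1) ∧
      ((kappa Buyers Sellers s ξ z KA).2 \ (kappa Buyers Sellers s ξ z KB).2 ⊆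
        (kappa Buyers Sellers s ξ z KC).2 \ (kappa Buyers Sellers s ξ z KD).2) := by
    intro z
    induction z with
    | zero =>
      constructor
      · intro x hx
        simp only [kappa, hKA, hKB, hKC, hKD, Set.mem_diff, Set.mem_union,
          Set.mem_singleton_iff, Set.mem_empty_iff_false, not_false_iff, and_true] at hx ⊢
        tauto
      · intro x hx
        simp only [kappa, hKA, hKB, hKC, hKD, Set.mem_diff] at hx ⊢
        exact absurd hx.1 hx.2
    | succ n ih =>
      obtain ⟨ih1, ih2⟩ := ih
      set A := kappa Buyers Sellers s ξ n KA with hA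
      set B := kappa Buyers Sellers s ξ n KB with hB
      set C := kappa Buyers Sellers s ξ n KC with hC
      set D := kappa Buyers Sellers s ξ n KD with hD
      have hDB := kappa_mono Buyers Sellers s ξ n KD KB hDB1 hDB2
      have hDst := kappa_stay Buyers Sellers s ξ n KD (Set.empty_subset _)
        (Set.singleton_subset_iff.mpr hs)
      set l := ξ (n + 1) with hl
      have key : ∀ y : P, (y ∈ A.1 ∨ y ∈ A.2) → y ∉ B.1 → y ∉ B.2 →
          (y ∈ C.1 ∨ y ∈ C.2) ∧ y ∉ D.1 ∧ y ∉ D.2 := by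
        intro y hy hyB1 hyB2
        have hyD1 : y ∉ D.1 := fun h => hyB1 (hDB.1 h)
        have hyD2 : y ∉ D.2 := fun h => hyB2 (hDB.2 h)
        refine ⟨?_, hyD1, hyD2⟩
        rcases hy with hy | hy
        · exact Or.inl (ih1 ⟨hy, hyB1⟩).1
        · exact Or.inr (ih2 ⟨hy, hyB2⟩).1
      constructor
      · -- buyer component
        intro x hx
        obtain ⟨hxA, hxB⟩ := hx
        simp only [kappa, ← hA, ← hB, ← hC, ← hD, ← hl] at hxA hxB ⊢
        simp only [diffuseStep, Set.mem_union, Set.mem_setOf_eq] at hxA hxB ⊢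
        push_neg at hxB
        obtain ⟨hxB1, hxBnew⟩ := hxB
        have hxD1 : x ∉ D.1 := fun h => hxB1 (hDB.1 h)
        by_cases hxA1 : x ∈ A.1
        case pos =>
          have hxCD := ih1 ⟨hxA1, hxB1⟩
          refine ⟨Or.inl hxCD.1, ?_⟩
          rintro (h | ⟨hxBu, hxD, hlink⟩)
          · exact hxCD.2 h
          · obtain ⟨hnew1, hnew2⟩ := hxBnew hxBu hxB1
            rcases hlink with ⟨he, hm⟩ | ⟨he, hm⟩
            · rcases hm with hm | hm
              · exact (hnew1 he).1 (hDB.1 hm)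
              · exact (hnew1 he).2 (hDB.2 hm)
            · rcases hm with hm | hm
              · exact (hnew2 he).1 (hDB.1 hm)
              · exact (hnew2 he).2 (hDB.2 hm)
        case neg =>
          rcases hxA with hxA1' | ⟨hxBu, _, hlink⟩
          · exact absurd hxA1' hxA1
          have hxD2 : x ∉ D.2 := fun h => hmemB x hxBu (hDst.2 h)
          obtain ⟨hnew1, hnew2⟩ := hxBnew hxBu hxB1
          rcases hlink with ⟨he, hm⟩ | ⟨he, hm⟩
          · -- partner is l.2
            have hp1 : l.2 ∉ B.1 := (hnew1 he).1
            have hp2 : l.2 ∉ B.2 := (hnew1 he).2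
            obtain ⟨hpC, hpD1, hpD2⟩ := key l.2 hm hp1 hp2
            constructor
            · by_cases hxC1 : x ∈ C.1
              · exact Or.inl hxC1
              · exact Or.inr ⟨hxBu, hxC1, Or.inl ⟨he, hpC⟩⟩
            · rintro (h | ⟨_, _, hlink'⟩)
              · exact hxD1 h
              · rcases hlink' with ⟨he', hm'⟩ | ⟨he', hm'⟩
                · rcases hm' with hm' | hm'
                  · exact hpD1 hm'
                  · exact hpD2 hm'
                · rcases hm' with hm' | hm'
                  · exact hxD1 (he ▸ hm')
                  · exact hxD2 (he ▸ hm')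
          · -- partner is l.1
            have hp1 : l.1 ∉ B.1 := (hnew2 he).1
            have hp2 : l.1 ∉ B.2 := (hnew2 he).2
            obtain ⟨hpC, hpD1, hpD2⟩ := key l.1 hm hp1 hp2
            constructor
            · by_cases hxC1 : x ∈ C.1
              · exact Or.inl hxC1
              · exact Or.inr ⟨hxBu, hxC1, Or.inr ⟨he, hpC⟩⟩
            · rintro (h | ⟨_, _, hlink'⟩)
              · exact hxD1 h
              · rcases hlink' with ⟨he', hm'⟩ | ⟨he', hm'⟩
                · rcases hm' with hm' | hm'
                  · exact hxD1 (he ▸ hm')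
                  · exact hxD2 (he ▸ hm')
                · rcases hm' with hm' | hm'
                  · exact hpD1 hm'
                  · exact hpD2 hm'
      · -- seller component
        intro x hx
        obtain ⟨hxA, hxB⟩ := hx
        simp only [kappa, ← hA, ← hB, ← hC, ← hD, ← hl] at hxA hxB ⊢
        simp only [diffuseStep, Set.mem_union, Set.mem_setOf_eq, Set.mem_diff,
          Set.mem_singleton_iff] at hxA hxB ⊢
        push_neg at hxB
        obtain ⟨hxB2, hxBnew⟩ := hxB
        have hxD2 : x ∉ D.2 := fun h => hxB2 (hDB.2 h)
        by_cases hxA2 : x ∈ A.2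
        case pos =>
          have hxCD := ih2 ⟨hxA2, hxB2⟩
          refine ⟨Or.inl hxCD.1, ?_⟩
          rintro (h | ⟨hxSe, hxns, hxD, hlink⟩)
          · exact hxCD.2 h
          · obtain ⟨hnew1, hnew2⟩ := hxBnew hxSe hxns hxB2
            rcases hlink with ⟨he, hm, hmn⟩ | ⟨he, hm, hmn⟩
            · rcases hm with hm | hm
              · exact hmn (hnew1 he (Or.inl (hDB.1 hm)))
              · exact hmn (hnew1 he (Or.inr (hDB.2 hm)))
            · rcases hm with hm | hm
              · exact hmn (hnew2 he (Or.inl (hDB.1 hm)))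
              · exact hmn (hnew2 he (Or.inr (hDB.2 hm)))
        case neg =>
          rcases hxA with hxA2' | ⟨hxSe, hxns, _, hlink⟩
          · exact absurd hxA2' hxA2
          have hxD1 : x ∉ D.1 := fun h => hmemB x (hDst.1 h) hxSe
          obtain ⟨hnew1, hnew2⟩ := hxBnew hxSe hxns hxB2
          rcases hlink with ⟨he, hm, hmn⟩ | ⟨he, hm, hmn⟩
          · -- partner is l.2
            have hp1 : l.2 ∉ B.1 := fun h => hmn (hnew1 he (Or.inl h))
            have hp2 : l.2 ∉ B.2 := fun h => hmn (hnew1 he (Or.inr h))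
            obtain ⟨hpC, hpD1, hpD2⟩ := key l.2 hm hp1 hp2
            constructor
            · by_cases hxC2 : x ∈ C.2
              · exact Or.inl hxC2
              · exact Or.inr ⟨hxSe, hxns, hxC2, Or.inl ⟨he, hpC, hmn⟩⟩
            · rintro (h | ⟨_, _, _, hlink'⟩)
              · exact hxD2 h
              · rcases hlink' with ⟨he', hm', _⟩ | ⟨he', hm', _⟩
                · rcases hm' with hm' | hm'
                  · exact hpD1 hm'
                  · exact hpD2 hm'
                · rcases hm' with hm' | hm'
                  · exact hxD1 (he ▸ hm')
                  · exact hxD2 (he ▸ hm')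
          · -- partner is l.1
            have hp1 : l.1 ∉ B.1 := fun h => hmn (hnew2 he (Or.inl h))
            have hp2 : l.1 ∉ B.2 := fun h => hmn (hnew2 he (Or.inr h))
            obtain ⟨hpC, hpD1, hpD2⟩ := key l.1 hm hp1 hp2
            constructor
            · by_cases hxC2 : x ∈ C.2
              · exact Or.inl hxC2
              · exact Or.inr ⟨hxSe, hxns, hxC2, Or.inr ⟨he, hpC, hmn⟩⟩
            · rintro (h | ⟨_, _, _, hlink'⟩)
              · exact hxD2 h
              · rcases hlink' with ⟨he', hm', _⟩ | ⟨he', hm', _⟩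
                · rcases hm' with hm' | hm'
                  · exact hxD1 (he ▸ hm')
                  · exact hxD2 (he ▸ hm')
                · rcases hm' with hm' | hm'
                  · exact hpD1 hm'
                  · exact hpD2 hm'
  intro z
  exact (main z).1
end

section
/- In the recursive system of the previous context, V is monotone: V(k_b+1, k_s) ≤ V(k_b, k_s) for all admissible k_b, k_s, i.e., the guilty seller's continuation value is nonincreasing in the number of buyers who deem her guilty. -/
/-- Total rate of informative events when `kb` buyers and `ks` sellers are informed. -/
def totalRate (B S : ℕ) (lBS lBB lSS : ℝ) (kb ks : ℕ) : ℝ :=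
  lBB * kb * ((B : ℝ) - kb) + lSS * ((ks : ℝ) - 1) * ((S : ℝ) - ks)
    + lBS * kb * ((S : ℝ) - ks) + lBS * ks * ((B : ℝ) - kb)

/-- `V` satisfies the recursive system of the guilty seller's continuation values. -/
def SatisfiesSystem (B S : ℕ) (r lBS lBB lSS : ℝ) (V : ℕ → ℕ → ℝ) : Prop :=
  (∀ ks : ℕ, V B ks = 0) ∧
  ∀ kb ks : ℕ, 1 ≤ kb → kb ≤ B - 1 → 1 ≤ ks → ks ≤ S →
    V kb ks = (lBB * kb * ((B : ℝ) - kb) * V (kb + 1) ks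
        + lSS * ((ks : ℝ) - 1) * ((S : ℝ) - ks) * V kb (ks + 1)
        + lBS * kb * ((S : ℝ) - ks) * V kb (ks + 1)
        + lBS * ks * ((B : ℝ) - kb) * V (kb + 1) ks
        + lBS * ((B : ℝ) - kb))
      / (r + totalRate B S lBS lBB lSS kb ks)

private lemma rate_pos {B S : ℕ} {r lBS lBB lSS : ℝ} (hr : 0 < r) (hBS : 0 < lBS)
    (hBB : 0 < lBB) (hSS : 0 < lSS) {kb ks : ℕ} (hkb : kb ≤ B) (hks1 : 1 ≤ ks)
    (hks : ks ≤ S) : 0 < r + totalRate B S lBS lBB lSS kb ks := by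
  have h1 : (kb : ℝ) ≤ B := by exact_mod_cast hkb
  have h2 : (1 : ℝ) ≤ (ks : ℝ) := by exact_mod_cast hks1
  have h3 : (ks : ℝ) ≤ S := by exact_mod_cast hks
  have h4 : (0 : ℝ) ≤ (kb : ℝ) := Nat.cast_nonneg kb
  have t1 : 0 ≤ lBB * kb * ((B : ℝ) - kb) :=
    mul_nonneg (mul_nonneg hBB.le h4) (by linarith)
  have t2 : 0 ≤ lSS * ((ks : ℝ) - 1) * ((S : ℝ) - ks) :=
    mul_nonneg (mul_nonneg hSS.le (by linarith)) (by linarith)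
  have t3 : 0 ≤ lBS * kb * ((S : ℝ) - ks) :=
    mul_nonneg (mul_nonneg hBS.le h4) (by linarith)
  have t4 : 0 ≤ lBS * ks * ((B : ℝ) - kb) :=
    mul_nonneg (mul_nonneg hBS.le (by linarith)) (by linarith)
  unfold totalRate
  linarith

set_option maxHeartbeats 2000000 in
private lemma master (B S : ℕ) (hB : 2 ≤ B) (hS : 1 ≤ S)
    (r lBS lBB lSS : ℝ) (hr : 0 < r) (hBS : 0 < lBS) (hBB : 0 < lBB) (hSS : 0 < lSS)
    (V : ℕ → ℕ → ℝ) (hV : SatisfiesSystem B S r lBS lBB lSS V) :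
    ∀ n kb ks, 1 ≤ kb → kb ≤ B → 1 ≤ ks → ks ≤ S → (B - kb) + (S - ks) ≤ n →
      0 ≤ V kb ks ∧ (kb < B → V (kb + 1) ks ≤ V kb ks) ∧
        (ks < S → V kb (ks + 1) ≤ V kb ks) := by
  obtain ⟨hV0, hVrec⟩ := hV
  intro n
  induction n with
  | zero =>
    intro kb ks h1 h2 h3 h4 h5
    have hkb : kb = B := by omega
    have hks : ks = S := by omega
    refine ⟨?_, ?_, ?_⟩
    · rw [hkb]; exact (hV0 ks).ge
    · intro h; exact absurd h (by omega)
    · intro h; exact absurd h (by omega)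
  | succ n ih =>
    intro kb ks hkb1 hkbB hks1 hksS hm
    rcases eq_or_lt_of_le hkbB with hEq | hlt
    · -- kb = B
      refine ⟨?_, ?_, ?_⟩
      · rw [hEq]; exact (hV0 ks).ge
      · intro h; exact absurd h (by omega)
      · intro _; rw [hEq, hV0 ks, hV0 (ks + 1)]
    · -- kb < B
      have hkbB1 : kb ≤ B - 1 := by omega
      have cB : (kb : ℝ) + 1 ≤ B := by exact_mod_cast hlt
      have ckb : (1 : ℝ) ≤ (kb : ℝ) := by exact_mod_cast hkb1
      have cks : (1 : ℝ) ≤ (ks : ℝ) := by exact_mod_cast hks1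
      have cS : (ks : ℝ) ≤ S := by exact_mod_cast hksS
      have hd1 : 0 < r + totalRate B S lBS lBB lSS kb ks :=
        rate_pos hr hBS hBB hSS (by omega) hks1 hksS
      have eq1 := hVrec kb ks hkb1 hkbB1 hks1 hksS
      have e1 := (eq_div_iff hd1.ne').mp eq1
      -- nonnegativity
      have hV2 : 0 ≤ V (kb + 1) ks :=
        (ih (kb + 1) ks (by omega) (by omega) hks1 hksS (by omega)).1
      have hqv : 0 ≤ ((S : ℝ) - ks) * V kb (ks + 1) := by
        rcases eq_or_lt_of_le hksS with hE | hL
        · have hz : (S : ℝ) - ks = 0 := by rw [hE]; ring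
          rw [hz, zero_mul]
        · have h := (ih kb (ks + 1) hkb1 (by omega) (by omega) (by omega) (by omega)).1
          have : (ks : ℝ) + 1 ≤ S := by exact_mod_cast hL
          exact mul_nonneg (by linarith) h
      have hN : 0 ≤ V kb ks := by
        rw [eq1]
        apply div_nonneg _ hd1.le
        have t1 : 0 ≤ lBB * kb * ((B : ℝ) - kb) * V (kb + 1) ks :=
          mul_nonneg (mul_nonneg (mul_nonneg hBB.le (by linarith)) (by linarith)) hV2
        have t2 : 0 ≤ lSS * ((ks : ℝ) - 1) * ((S : ℝ) - ks) * V kb (ks + 1) := by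
          have h : lSS * ((ks : ℝ) - 1) * ((S : ℝ) - ks) * V kb (ks + 1)
              = (lSS * ((ks : ℝ) - 1)) * (((S : ℝ) - ks) * V kb (ks + 1)) := by ring
          rw [h]
          exact mul_nonneg (mul_nonneg hSS.le (by linarith)) hqv
        have t3 : 0 ≤ lBS * kb * ((S : ℝ) - ks) * V kb (ks + 1) := by
          have h : lBS * kb * ((S : ℝ) - ks) * V kb (ks + 1)
              = (lBS * (kb : ℝ)) * (((S : ℝ) - ks) * V kb (ks + 1)) := by ring
          rw [h]
          exact mul_nonneg (mul_nonneg hBS.le (by linarith)) hqv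
        have t4 : 0 ≤ lBS * ks * ((B : ℝ) - kb) * V (kb + 1) ks :=
          mul_nonneg (mul_nonneg (mul_nonneg hBS.le (by linarith)) (by linarith)) hV2
        have t5 : 0 ≤ lBS * ((B : ℝ) - kb) :=
          mul_nonneg hBS.le (by linarith)
        linarith
      refine ⟨hN, ?_, ?_⟩
      · -- monotone in kb
        intro _
        rcases eq_or_lt_of_le (show kb + 1 ≤ B by omega) with hE2 | hlt2
        · rw [hE2, hV0 ks]; exact hN
        · have hd2 : 0 < r + totalRate B S lBS lBB lSS (kb + 1) ks :=
            rate_pos hr hBS hBB hSS (by omega) hks1 hksS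
          have eq2 := hVrec (kb + 1) ks (by omega) (by omega) hks1 hksS
          have e2 := (eq_div_iff hd2.ne').mp eq2
          have hD1 : V (kb + 1 + 1) ks ≤ V (kb + 1) ks :=
            (ih (kb + 1) ks (by omega) (by omega) hks1 hksS (by omega)).2.1 hlt2
          have hP2 : 0 ≤ lBB * ((kb : ℝ) + 1) * ((B : ℝ) - ((kb : ℝ) + 1))
              + lBS * (ks : ℝ) * ((B : ℝ) - ((kb : ℝ) + 1)) := by
            have c2 : (kb : ℝ) + 1 + 1 ≤ B := by exact_mod_cast hlt2
            have u1 : 0 ≤ lBB * ((kb : ℝ) + 1) * ((B : ℝ) - ((kb : ℝ) + 1)) :=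
              mul_nonneg (mul_nonneg hBB.le (by linarith)) (by linarith)
            have u2 : 0 ≤ lBS * (ks : ℝ) * ((B : ℝ) - ((kb : ℝ) + 1)) :=
              mul_nonneg (mul_nonneg hBS.le (by linarith)) (by linarith)
            linarith
          have hQE : 0 ≤ (lSS * ((ks : ℝ) - 1) * ((S : ℝ) - ks)
              + lBS * (kb : ℝ) * ((S : ℝ) - ks))
              * (V kb (ks + 1) - V (kb + 1) (ks + 1)) := by
            rcases eq_or_lt_of_le hksS with hE | hL
            · have hz : (S : ℝ) - ks = 0 := by rw [hE]; ring
              have h0 : (lSS * ((ks : ℝ) - 1) * ((S : ℝ) - ks)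
                  + lBS * (kb : ℝ) * ((S : ℝ) - ks))
                  * (V kb (ks + 1) - V (kb + 1) (ks + 1)) = 0 := by rw [hz]; ring
              linarith
            · have hDks1 : V (kb + 1) (ks + 1) ≤ V kb (ks + 1) :=
                (ih kb (ks + 1) hkb1 (by omega) (by omega) (by omega) (by omega)).2.1 hlt
              have hSk : (ks : ℝ) + 1 ≤ S := by exact_mod_cast hL
              have hco : 0 ≤ lSS * ((ks : ℝ) - 1) * ((S : ℝ) - ks)
                  + lBS * (kb : ℝ) * ((S : ℝ) - ks) := by
                have u1 : 0 ≤ lSS * ((ks : ℝ) - 1) * ((S : ℝ) - ks) :=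
                  mul_nonneg (mul_nonneg hSS.le (by linarith)) (by linarith)
                have u2 : 0 ≤ lBS * (kb : ℝ) * ((S : ℝ) - ks) :=
                  mul_nonneg (mul_nonneg hBS.le (by linarith)) (by linarith)
                linarith
              exact mul_nonneg hco (by linarith)
          have hES : 0 ≤ lBS * ((S : ℝ) - ks)
              * (V (kb + 1) ks - V (kb + 1) (ks + 1)) := by
            rcases eq_or_lt_of_le hksS with hE | hL
            · have hz : (S : ℝ) - ks = 0 := by rw [hE]; ring
              have h0 : lBS * ((S : ℝ) - ks)
                  * (V (kb + 1) ks - V (kb + 1) (ks + 1)) = 0 := by rw [hz]; ring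
              linarith
            · have hEsk : V (kb + 1) (ks + 1) ≤ V (kb + 1) ks :=
                (ih (kb + 1) ks (by omega) (by omega) hks1 hksS (by omega)).2.2 hL
              have hSk : (ks : ℝ) + 1 ≤ S := by exact_mod_cast hL
              exact mul_nonneg (mul_nonneg hBS.le (by linarith)) (by linarith)
          have key : (r + totalRate B S lBS lBB lSS kb ks) * (V kb ks - V (kb + 1) ks)
              = (lBB * ((kb : ℝ) + 1) * ((B : ℝ) - ((kb : ℝ) + 1))
                  + lBS * (ks : ℝ) * ((B : ℝ) - ((kb : ℝ) + 1)))
                  * (V (kb + 1) ks - V (kb + 1 + 1) ks)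
                + (lSS * ((ks : ℝ) - 1) * ((S : ℝ) - ks)
                  + lBS * (kb : ℝ) * ((S : ℝ) - ks))
                  * (V kb (ks + 1) - V (kb + 1) (ks + 1))
                + lBS * ((S : ℝ) - ks) * (V (kb + 1) ks - V (kb + 1) (ks + 1))
                + lBS := by
            unfold totalRate at e1 e2 ⊢
            push_cast at e1 e2 ⊢
            linear_combination e1 - e2
          have hPD : 0 ≤ (lBB * ((kb : ℝ) + 1) * ((B : ℝ) - ((kb : ℝ) + 1))
              + lBS * (ks : ℝ) * ((B : ℝ) - ((kb : ℝ) + 1)))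
              * (V (kb + 1) ks - V (kb + 1 + 1) ks) := mul_nonneg hP2 (by linarith)
          have hfin : 0 ≤ (r + totalRate B S lBS lBB lSS kb ks)
              * (V kb ks - V (kb + 1) ks) := by
            rw [key]; linarith
          have hres : (0 : ℝ) ≤ V kb ks - V (kb + 1) ks := by
            by_contra h
            push_neg at h
            have hneg : (r + totalRate B S lBS lBB lSS kb ks)
                * (V kb ks - V (kb + 1) ks) < 0 :=
              mul_neg_of_pos_of_neg hd1 h
            linarith
          linarith
      · -- monotone in ks
        intro hksLt
        have hd3 : 0 < r + totalRate B S lBS lBB lSS kb (ks + 1) :=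
          rate_pos hr hBS hBB hSS (by omega) (by omega) (by omega)
        have eq3 := hVrec kb (ks + 1) hkb1 hkbB1 (by omega) (by omega)
        have e3 := (eq_div_iff hd3.ne').mp eq3
        have cS1 : (ks : ℝ) + 1 ≤ S := by exact_mod_cast hksLt
        have hEb : 0 ≤ (lBB * (kb : ℝ) * ((B : ℝ) - kb)
            + lBS * (ks : ℝ) * ((B : ℝ) - kb))
            * (V (kb + 1) ks - V (kb + 1) (ks + 1)) := by
          rcases eq_or_lt_of_le (show kb + 1 ≤ B by omega) with hE | hL
          · have h0 : V (kb + 1) ks = 0 := by rw [hE]; exact hV0 ks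
            have h0' : V (kb + 1) (ks + 1) = 0 := by rw [hE]; exact hV0 (ks + 1)
            rw [h0, h0']; simp
          · have hEsk : V (kb + 1) (ks + 1) ≤ V (kb + 1) ks :=
              (ih (kb + 1) ks (by omega) (by omega) hks1 hksS (by omega)).2.2 hksLt
            have hco : 0 ≤ lBB * (kb : ℝ) * ((B : ℝ) - kb)
                + lBS * (ks : ℝ) * ((B : ℝ) - kb) := by
              have u1 : 0 ≤ lBB * (kb : ℝ) * ((B : ℝ) - kb) :=
                mul_nonneg (mul_nonneg hBB.le (by linarith)) (by linarith)
              have u2 : 0 ≤ lBS * (ks : ℝ) * ((B : ℝ) - kb) :=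
                mul_nonneg (mul_nonneg hBS.le (by linarith)) (by linarith)
              linarith
            exact mul_nonneg hco (by linarith)
        have hQ3 : 0 ≤ (lSS * (ks : ℝ) * ((S : ℝ) - (ks : ℝ) - 1)
            + lBS * (kb : ℝ) * ((S : ℝ) - (ks : ℝ) - 1))
            * (V kb (ks + 1) - V kb (ks + 1 + 1)) := by
          rcases eq_or_lt_of_le (show ks + 1 ≤ S by omega) with hE | hL
          · have hz : (S : ℝ) - (ks : ℝ) - 1 = 0 := by
              have h : ((ks : ℝ) + 1) = S := by exact_mod_cast hE
              linarith
            have h0 : (lSS * (ks : ℝ) * ((S : ℝ) - (ks : ℝ) - 1)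
                + lBS * (kb : ℝ) * ((S : ℝ) - (ks : ℝ) - 1))
                * (V kb (ks + 1) - V kb (ks + 1 + 1)) = 0 := by rw [hz]; ring
            linarith
          · have hDs : V kb (ks + 1 + 1) ≤ V kb (ks + 1) :=
              (ih kb (ks + 1) hkb1 (by omega) (by omega) (by omega) (by omega)).2.2 hL
            have h2 : (ks : ℝ) + 1 + 1 ≤ S := by exact_mod_cast hL
            have hco : 0 ≤ lSS * (ks : ℝ) * ((S : ℝ) - (ks : ℝ) - 1)
                + lBS * (kb : ℝ) * ((S : ℝ) - (ks : ℝ) - 1) := by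
              have u1 : 0 ≤ lSS * (ks : ℝ) * ((S : ℝ) - (ks : ℝ) - 1) :=
                mul_nonneg (mul_nonneg hSS.le (by linarith)) (by linarith)
              have u2 : 0 ≤ lBS * (kb : ℝ) * ((S : ℝ) - (ks : ℝ) - 1) :=
                mul_nonneg (mul_nonneg hBS.le (by linarith)) (by linarith)
              linarith
            exact mul_nonneg hco (by linarith)
        have hDk : 0 ≤ lBS * ((B : ℝ) - kb)
            * (V kb (ks + 1) - V (kb + 1) (ks + 1)) := by
          have hDks1 : V (kb + 1) (ks + 1) ≤ V kb (ks + 1) :=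
            (ih kb (ks + 1) hkb1 (by omega) (by omega) (by omega) (by omega)).2.1 hlt
          exact mul_nonneg (mul_nonneg hBS.le (by linarith)) (by linarith)
        have key2 : (r + totalRate B S lBS lBB lSS kb ks) * (V kb ks - V kb (ks + 1))
            = (lBB * (kb : ℝ) * ((B : ℝ) - kb) + lBS * (ks : ℝ) * ((B : ℝ) - kb))
                * (V (kb + 1) ks - V (kb + 1) (ks + 1))
              + (lSS * (ks : ℝ) * ((S : ℝ) - (ks : ℝ) - 1)
                + lBS * (kb : ℝ) * ((S : ℝ) - (ks : ℝ) - 1))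
                * (V kb (ks + 1) - V kb (ks + 1 + 1))
              + lBS * ((B : ℝ) - kb) * (V kb (ks + 1) - V (kb + 1) (ks + 1)) := by
          unfold totalRate at e1 e3 ⊢
          push_cast at e1 e3 ⊢
          linear_combination e1 - e3
        have hfin : 0 ≤ (r + totalRate B S lBS lBB lSS kb ks)
            * (V kb ks - V kb (ks + 1)) := by
          rw [key2]; linarith
        have hres : (0 : ℝ) ≤ V kb ks - V kb (ks + 1) := by
          by_contra h
          push_neg at h
          have hneg : (r + totalRate B S lBS lBB lSS kb ks)
              * (V kb ks - V kb (ks + 1)) < 0 :=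
            mul_neg_of_pos_of_neg hd1 h
          linarith
        linarith

/-- The guilty seller's continuation value is nonincreasing in the number of buyers
who deem her guilty: `V(k_b+1, k_s) ≤ V(k_b, k_s)` on the admissible domain. -/
theorem viscosity_monotone_in_informed_buyers (B S : ℕ) (hB : 2 ≤ B) (hS : 1 ≤ S)
    (r lBS lBB lSS : ℝ) (hr : 0 < r) (hBS : 0 < lBS) (hBB : 0 < lBB) (hSS : 0 < lSS)
    (V : ℕ → ℕ → ℝ) (hV : SatisfiesSystem B S r lBS lBB lSS V) :
    ∀ kb ks : ℕ, 1 ≤ kb → kb ≤ B - 1 → 1 ≤ ks → ks ≤ S →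
      V (kb + 1) ks ≤ V kb ks := by
  intro kb ks h1 h2 h3 h4
  exact (master B S hB hS r lBS lBB lSS hr hBS hBB hSS V hV (B + S) kb ks h1 (by omega)
    h3 h4 (by omega)).2.1 (by omega)
end
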